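/- For every x ∈ ℂ with σ₁₂·Re x + μ₂ > 0 there exists y ∈ ℂ with γ(x,y) = 0 and Re y < 0; in fact, setting u := Re x, D(x) := (σ₁₂² − σ₁₁σ₂₂)x² + 2(μ₂σ₁₂ − μ₁σ₂₂)x + μ₂² and s := √((Re D(x) + |D(x)|)/2), some root y of γ(x,·) = 0 satisfies Re y = (−σ₁₂u − μ₂ − s)/σ₂₂ < 0. (This covers the strip u ∈ (−ε, x_max + δ) of Lemma 3.1(iii), where δ = ∞ if σ₁₂ ≥ 0 and δ = −μ₂/σ₁₂ − x_max if σ₁₂ < 0.) -/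

import Mathlib

open Real Complex

theorem stmt3
    (σ11 σ12 σ22 μ1 μ2 : ℝ)
    (hσ11 : 0 < σ11) (hσ22 : 0 < σ22)
    (hdet : 0 < σ11 * σ22 - σ12 ^ 2)
    (hμ1 : 0 < μ1) (hμ2 : 0 < μ2)
    (γ : ℂ → ℂ → ℂ)
    (hγ : ∀ x y : ℂ, γ x y =
      (1 / 2) * ((σ11 : ℂ) * x ^ 2 + 2 * (σ12 : ℂ) * x * y + (σ22 : ℂ) * y ^ 2)
        + (μ1 : ℂ) * x + (μ2 : ℂ) * y)
    (x : ℂ) (hx : σ12 * x.re + μ2 > 0)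
    (u : ℝ) (hu : u = x.re)
    (D : ℂ)
    (hD : D = ((σ12 : ℂ) ^ 2 - (σ11 : ℂ) * (σ22 : ℂ)) * x ^ 2
      + 2 * ((μ2 : ℂ) * (σ12 : ℂ) - (μ1 : ℂ) * (σ22 : ℂ)) * x + (μ2 : ℂ) ^ 2)
    (s : ℝ) (hs : s = Real.sqrt ((D.re + ‖D‖) / 2)) :
    ∃ y : ℂ, γ x y = 0 ∧ y.re = (-σ12 * u - μ2 - s) / σ22 ∧ y.re < 0 := by
  have hA : |D.re| ≤ ‖D‖ := Complex.abs_re_le_norm D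
  have h1 : 0 ≤ (D.re + ‖D‖) / 2 := by
    have := neg_abs_le D.re; linarith
  have h2 : 0 ≤ (‖D‖ - D.re) / 2 := by
    have := le_abs_self D.re; linarith
  set t : ℝ := Real.sqrt ((‖D‖ - D.re) / 2) with ht
  have hs2 : s ^ 2 = (D.re + ‖D‖) / 2 := by
    rw [hs, Real.sq_sqrt h1]
  have ht2 : t ^ 2 = (‖D‖ - D.re) / 2 := by
    rw [ht, Real.sq_sqrt h2]
  have hsn : 0 ≤ s := hs ▸ Real.sqrt_nonneg _
  have htn : 0 ≤ t := Real.sqrt_nonneg _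
  have hAsq : (‖D‖) ^ 2 = D.re ^ 2 + D.im ^ 2 := by
    rw [Complex.sq_norm, Complex.normSq_apply]; ring
  have hst : s * t = |D.im| / 2 := by
    rw [hs, ht, ← Real.sqrt_mul h1]
    have : (D.re + ‖D‖) / 2 * ((‖D‖ - D.re) / 2) = (D.im / 2) ^ 2 := by
      nlinarith [hAsq]
    rw [this, Real.sqrt_sq_eq_abs, abs_div]
    simp
  set t' : ℝ := if 0 ≤ D.im then t else -t with ht'
  have hex : ∃ w : ℂ, w.re = s ∧ w ^ 2 = D := by
    refine ⟨⟨s, t'⟩, rfl, ?_⟩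
    apply Complex.ext
    · simp only [pow_two, Complex.mul_re]
      have ht'2 : t' * t' = t ^ 2 := by
        rw [ht']; split_ifs <;> ring
      rw [ht'2] at *
      linear_combination hs2 - ht2
    · simp only [pow_two, Complex.mul_im]
      rw [ht']; split_ifs with h
      · have h' : |D.im| = D.im := abs_of_nonneg h
        linear_combination 2 * hst + h'
      · have h' : |D.im| = -D.im := abs_of_neg (not_le.mp h)
        linear_combination -2 * hst - h'
  obtain ⟨w, hwre, hw2⟩ := hex
  have hne : (σ22:ℂ) ≠ 0 := by exact_mod_cast hσ22.ne'
  refine ⟨(-(σ12 * x + μ2) - w) / σ22, ?_, ?_, ?_⟩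
  · set y : ℂ := (-(↑σ12 * x + ↑μ2) - w) / ↑σ22 with hy0
    have hy : (σ22:ℂ) * y = -(↑σ12 * x + ↑μ2) - w := by
      rw [hy0]; field_simp
    have h0 : (2 * (σ22:ℂ)) * γ x y = 0 := by
      rw [hγ]
      linear_combination ((σ22:ℂ) * y + ↑σ12 * x + ↑μ2 - w) * hy + hw2 + hD
    rcases mul_eq_zero.mp h0 with h | h
    · exact absurd h (by simp [hne])
    · exact h
  · rw [Complex.div_ofReal_re]
    congr 1
    simp [hwre, hu]
    ring
  · rw [Complex.div_ofReal_re]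
    apply div_neg_of_neg_of_pos _ hσ22
    have : (-(↑σ12 * x + ↑μ2) - w).re = -(σ12 * x.re + μ2) - s := by
      simp [hwre]
    rw [this]; linarith
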